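/- arXiv:1712.01243 — 7 statements merged into one kernel-verified Lean document; each statement's English description precedes it below -/
import Mathlib

section
/- Suppose n + 1 is an odd prime and δ ∈ {-1, 1}^{n+1} satisfies ∑_{k=0}^{n} δ_k * C(n, k) = 0. Then either δ_k = (-1)^k for all k, or δ_k = -(-1)^k for all k. In other words, only the two trivial alternating solutions of the bisection problem exist. -/
theorem only_trivial_bisections_of_succ_prime (n : ℕ) (hp : (n + 1).Prime)
    (hodd : Odd (n + 1)) (δ : ℕ → ℤ) (hδ : ∀ k ≤ n, δ k = 1 ∨ δ k = -1)
    (hsum : ∑ k ∈ Finset.range (n + 1), δ k * (n.choose k : ℤ) = 0) :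
    (∀ k ≤ n, δ k = (-1) ^ k) ∨ (∀ k ≤ n, δ k = -(-1) ^ k) := by
  -- C(n,k) ≡ (-1)^k mod (n+1)
  have cong : ∀ k, k ≤ n → ((n + 1 : ℕ) : ℤ) ∣ (n.choose k : ℤ) - (-1) ^ k := by
    intro k
    induction k with
    | zero => intro _; simp
    | succ k ih =>
      intro hk
      have h1 := ih (Nat.le_of_succ_le hk)
      have h2 : ((n + 1 : ℕ) : ℤ) ∣ ((n + 1).choose (k + 1) : ℤ) := by
        exact_mod_cast Int.natCast_dvd_natCast.mpr
          (Nat.Prime.dvd_choose_self hp (Nat.succ_ne_zero k) (Nat.lt_succ_of_le hk))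
      have hpascal : ((n + 1).choose (k + 1) : ℤ) = (n.choose k : ℤ) + (n.choose (k + 1) : ℤ) := by
        exact_mod_cast congrArg (Nat.cast : ℕ → ℤ) (Nat.choose_succ_succ n k)
      have hre : (n.choose (k + 1) : ℤ) - (-1) ^ (k + 1)
          = ((n + 1).choose (k + 1) : ℤ) - ((n.choose k : ℤ) - (-1) ^ k) := by
        rw [hpascal]; ring
      rw [hre]
      exact dvd_sub h2 h1
  set S := ∑ k ∈ Finset.range (n + 1), δ k * (-1) ^ k with hSdef
  have hterm : ∀ k ≤ n, δ k * (-1) ^ k = 1 ∨ δ k * (-1) ^ k = -1 := by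
    intro k hk
    rcases hδ k hk with h | h <;> rcases Nat.even_or_odd k with he | he <;>
      simp [h, he.neg_one_pow]
  have hdvdS : ((n + 1 : ℕ) : ℤ) ∣ S := by
    have hd : ((n + 1 : ℕ) : ℤ) ∣ ∑ k ∈ Finset.range (n + 1),
        δ k * ((n.choose k : ℤ) - (-1) ^ k) :=
      Finset.dvd_sum fun k hk =>
        Dvd.dvd.mul_left (cong k (Nat.lt_succ_iff.mp (Finset.mem_range.mp hk))) _
    have heq : ∑ k ∈ Finset.range (n + 1), δ k * ((n.choose k : ℤ) - (-1) ^ k)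
        = (∑ k ∈ Finset.range (n + 1), δ k * (n.choose k : ℤ)) - S := by
      rw [hSdef, ← Finset.sum_sub_distrib]
      exact Finset.sum_congr rfl fun k _ => by ring
    rw [heq, hsum, zero_sub, dvd_neg] at hd
    exact hd
  have hodd2 : (2 : ℤ) ∣ S - (n + 1) := by
    have heq : S - (n + 1 : ℕ) = ∑ k ∈ Finset.range (n + 1), (δ k * (-1) ^ k - 1) := by
      rw [Finset.sum_sub_distrib, Finset.sum_const, Finset.card_range]
      simp [hSdef]
    have : (2 : ℤ) ∣ ∑ k ∈ Finset.range (n + 1), (δ k * (-1) ^ k - 1) := by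
      refine Finset.dvd_sum fun k hk => ?_
      rcases hterm k (Nat.lt_succ_iff.mp (Finset.mem_range.mp hk)) with h | h <;>
        simp [h]
    push_cast at heq
    rw [heq]; exact this
  have hSne : S ≠ 0 := by
    intro h0
    rw [h0, zero_sub, dvd_neg] at hodd2
    have : (2 : ℤ) ∣ ((n + 1 : ℕ) : ℤ) := by exact_mod_cast hodd2
    have heven : 2 ∣ (n + 1) := by exact_mod_cast this
    exact (Nat.not_even_iff_odd.mpr hodd) (even_iff_two_dvd.mpr heven)
  have habs : |S| ≤ ((n + 1 : ℕ) : ℤ) := by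
    calc |S| ≤ ∑ k ∈ Finset.range (n + 1), |δ k * (-1) ^ k| :=
          Finset.abs_sum_le_sum_abs _ _
      _ = ∑ k ∈ Finset.range (n + 1), (1 : ℤ) := by
          refine Finset.sum_congr rfl fun k hk => ?_
          rcases hterm k (Nat.lt_succ_iff.mp (Finset.mem_range.mp hk)) with h | h <;> simp [h]
      _ = ((n + 1 : ℕ) : ℤ) := by simp
  have hge : ((n + 1 : ℕ) : ℤ) ≤ |S| :=
    Int.le_of_dvd (abs_pos.mpr hSne) ((dvd_abs _ _).mpr hdvdS)
  have habse : |S| = ((n + 1 : ℕ) : ℤ) := le_antisymm habs hge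
  have hcases : S = ((n + 1 : ℕ) : ℤ) ∨ S = -((n + 1 : ℕ) : ℤ) :=
    abs_eq (by positivity) |>.mp habse
  rcases hcases with hS | hS
  · left
    have hall : ∀ j ≤ n, δ j * (-1) ^ j = 1 := by
      by_contra hcon
      push_neg at hcon
      obtain ⟨j, hj, hne⟩ := hcon
      have hjv : δ j * (-1) ^ j = -1 := (hterm j hj).resolve_left hne
      have hlt : S < ∑ k ∈ Finset.range (n + 1), (1 : ℤ) := by
        refine Finset.sum_lt_sum (fun i hi => ?_)
          ⟨j, Finset.mem_range.mpr (Nat.lt_succ_of_le hj), by rw [hjv]; norm_num⟩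
        rcases hterm i (Nat.lt_succ_iff.mp (Finset.mem_range.mp hi)) with h | h <;> simp [h]
      rw [hS] at hlt
      simp at hlt
    intro k hk
    have := hall k hk
    rcases Nat.even_or_odd k with he | he <;> simp [he.neg_one_pow] at this ⊢ <;> linarith
  · right
    have hall : ∀ j ≤ n, δ j * (-1) ^ j = -1 := by
      by_contra hcon
      push_neg at hcon
      obtain ⟨j, hj, hne⟩ := hcon
      have hjv : δ j * (-1) ^ j = 1 := (hterm j hj).resolve_right hne
      have hlt : ∑ k ∈ Finset.range (n + 1), (-1 : ℤ) < S := by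
        refine Finset.sum_lt_sum (fun i hi => ?_)
          ⟨j, Finset.mem_range.mpr (Nat.lt_succ_of_le hj), by rw [hjv]; norm_num⟩
        rcases hterm i (Nat.lt_succ_iff.mp (Finset.mem_range.mp hi)) with h | h <;> simp [h]
      rw [hS] at hlt
      simp at hlt
    intro k hk
    have := hall k hk
    rcases Nat.even_or_odd k with he | he <;> simp [he.neg_one_pow] at this ⊢ <;> linarith
end

section
/- Suppose n + 1 is an odd prime and δ ∈ {-1, 1}^{n+1} satisfies ∑_{k=0}^{n} δ_k * C(n, k) = 0. Then the integer Δ = ∑_{j=0}^{n} (-1)^j δ_j satisfies |Δ| = n + 1. -/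
lemma choose_mod_prime (n : ℕ) (hp : (n + 1).Prime) :
    ∀ k ≤ n, ((n.choose k : ℤ) : ZMod (n + 1)) = (-1) ^ k := by
  intro k hk
  induction k with
  | zero => simp
  | succ k ih =>
    have hdvd : (n + 1) ∣ (n + 1).choose (k + 1) :=
      hp.dvd_choose_self (Nat.succ_ne_zero k) (by omega)
    have h : (n + 1).choose (k + 1) = n.choose k + n.choose (k + 1) :=
      Nat.choose_succ_succ n k
    have h0 : ((((n + 1).choose (k + 1) : ℤ)) : ZMod (n + 1)) = 0 := by
      rw [ZMod.intCast_zmod_eq_zero_iff_dvd]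
      exact_mod_cast Int.natCast_dvd_natCast.mpr hdvd
    rw [h] at h0
    push_cast at h0 ⊢
    have := ih (by omega)
    push_cast at this
    rw [this] at h0
    rw [pow_succ]
    linear_combination h0

theorem abs_alternating_sum_eq_succ (n : ℕ) (hp : (n + 1).Prime)
    (hodd : Odd (n + 1)) (δ : ℕ → ℤ) (hδ : ∀ k ≤ n, δ k = 1 ∨ δ k = -1)
    (hsum : ∑ k ∈ Finset.range (n + 1), δ k * (n.choose k : ℤ) = 0) :
    |∑ j ∈ Finset.range (n + 1), (-1 : ℤ) ^ j * δ j| = n + 1 := by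
  set Δ := ∑ j ∈ Finset.range (n + 1), (-1 : ℤ) ^ j * δ j with hΔ
  -- p divides Δ
  have hdvd : ((n : ℤ) + 1) ∣ Δ := by
    have : ((Δ : ℤ) : ZMod (n + 1)) = 0 := by
      have := congrArg (fun z : ℤ => ((z : ZMod (n + 1)))) hsum
      simp only [Int.cast_sum, Int.cast_mul, Int.cast_zero] at this
      rw [hΔ]
      push_cast
      rw [← this]
      apply Finset.sum_congr rfl
      intro k hk
      rw [Finset.mem_range] at hk
      rw [choose_mod_prime n hp k (by omega)]
      ring
    have h := (ZMod.intCast_zmod_eq_zero_iff_dvd Δ (n + 1)).mp this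
    exact_mod_cast h
  -- Δ is odd, hence nonzero
  have hΔodd : Odd Δ := by
    rw [hΔ, Int.odd_iff]
    have : Δ % 2 = ((n : ℤ) + 1) % 2 := by
      rw [hΔ, Finset.sum_int_mod]
      have : ∑ j ∈ Finset.range (n + 1), ((-1 : ℤ) ^ j * δ j) % 2
          = ∑ j ∈ Finset.range (n + 1), 1 := by
        apply Finset.sum_congr rfl
        intro k hk
        rw [Finset.mem_range] at hk
        rcases hδ k (by omega) with h | h <;>
          rcases neg_one_pow_eq_or ℤ k with he | he <;>
          rw [h, he] <;> norm_num
      rw [this]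
      simp
    rw [← hΔ, this]
    obtain ⟨m, hm⟩ := hodd
    omega

  have hne : Δ ≠ 0 := by
    intro h0
    rw [h0] at hΔodd
    exact (Int.not_odd_iff_even.mpr Even.zero) hΔodd
  -- |Δ| ≤ n + 1
  have hle : |Δ| ≤ (n : ℤ) + 1 := by
    calc |Δ| ≤ ∑ j ∈ Finset.range (n + 1), |(-1 : ℤ) ^ j * δ j| :=
          Finset.abs_sum_le_sum_abs _ _
      _ = ∑ j ∈ Finset.range (n + 1), 1 := by
          apply Finset.sum_congr rfl
          intro k hk
          rw [Finset.mem_range] at hk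
          rcases hδ k (by omega) with h | h <;> rw [h, abs_mul, abs_pow] <;> simp
      _ = (n : ℤ) + 1 := by simp
  have hge : (n : ℤ) + 1 ≤ |Δ| := by
    have h2 : ((n : ℤ) + 1) ∣ |Δ| := (dvd_abs _ _).mpr hdvd
    exact Int.le_of_dvd (abs_pos.mpr hne) h2
  have : |Δ| = (n : ℤ) + 1 := le_antisymm hle hge
  exact_mod_cast this
end

section
/- Let q be a prime such that p = 2q - 1 is also prime. Then for every j with 1 ≤ j ≤ q - 1, the integer C(p, j)/p is congruent to (-1)^{j-1} modulo q. -/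
lemma choose_sub_one_zmod (q : ℕ) (hq : q.Prime) :
    ∀ j, j ≤ q - 1 → ((Nat.choose (q - 1) j : ZMod q)) = (-1) ^ j := by
  intro j
  induction j with
  | zero => simp
  | succ k ih =>
    intro hk
    have hk' : k ≤ q - 1 := le_of_lt (Nat.lt_of_lt_of_le (Nat.lt_succ_self k) hk)
    have hq1 : q - 1 + 1 = q := Nat.succ_pred_eq_of_pos hq.pos
    have pascal : Nat.choose (q - 1) k + Nat.choose (q - 1) (k + 1) = Nat.choose q (k + 1) := by
      conv_rhs => rw [← hq1, Nat.choose_succ_succ']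
    have hdvd : q ∣ Nat.choose q (k + 1) :=
      hq.dvd_choose_self (Nat.succ_ne_zero k)
        (by omega)
    have h0 : ((Nat.choose q (k + 1) : ZMod q)) = 0 :=
      (ZMod.natCast_eq_zero_iff _ _).mpr hdvd
    have := congrArg (fun n : ℕ => (n : ZMod q)) pascal
    simp only [Nat.cast_add, h0] at this
    have : ((Nat.choose (q - 1) (k + 1) : ZMod q)) = -((Nat.choose (q - 1) k : ZMod q)) := by
      linear_combination this
    rw [this, ih hk', pow_succ]
    ring

theorem choose_div_prime_congr (q p : ℕ) (hq : q.Prime) (hp : p.Prime)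
    (hpq : p = 2 * q - 1) (j : ℕ) (hj1 : 1 ≤ j) (hj2 : j ≤ q - 1) :
    (q : ℤ) ∣ ((p.choose j / p : ℕ) : ℤ) - (-1) ^ (j - 1) := by
  have hq2 : 2 ≤ q := hq.two_le
  have hjq : j < q := by omega
  have hjp : j < p := by omega
  have hpdvd : p ∣ p.choose j := hp.dvd_choose_self (by omega) hjp
  have hmul : p.choose j / p * p = p.choose j := Nat.div_mul_cancel hpdvd
  haveI : Fact q.Prime := ⟨hq⟩
  -- work in ZMod q
  rw [← ZMod.intCast_zmod_eq_zero_iff_dvd, Int.cast_sub, Int.cast_pow, Int.cast_neg,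
    Int.cast_one, Int.cast_natCast, sub_eq_zero]
  -- p ≡ -1 mod q
  have hpcast : ((p : ℕ) : ZMod q) = -1 := by
    have : ((p : ℕ) : ZMod q) = ((2 * q - 1 : ℕ) : ZMod q) := by rw [hpq]
    rw [this]
    have h1 : (2 * q - 1 : ℕ) = 2 * q - 1 := rfl
    have : ((2 * q - 1 : ℕ) : ZMod q) = (2 * (q : ZMod q) - 1) := by
      push_cast [Nat.cast_sub (by omega : 1 ≤ 2 * q)]
      ring
    rw [this, ZMod.natCast_self]
    ring
  -- Lucas: choose p j ≡ choose (q-1) j mod q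
  have hlucas : ((p.choose j : ZMod q)) = ((Nat.choose (q - 1) j : ZMod q)) := by
    have h := (Choose.choose_modEq_choose_mod_mul_choose_div_nat (n := p) (k := j) (p := q))
    have hcast : ((p.choose j : ZMod q)) =
        ((Nat.choose (p % q) (j % q) * Nat.choose (p / q) (j / q) : ℕ) : ZMod q) :=
      (ZMod.natCast_eq_natCast_iff _ _ _).mpr h
    have hpeq : p = q * 1 + (q - 1) := by omega
    have hpmod : p % q = q - 1 := by
      rw [hpeq, Nat.mul_add_mod, Nat.mod_eq_of_lt (by omega)]
    have hpdiv : p / q = 1 := by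
      rw [hpeq, Nat.mul_add_div hq.pos, Nat.div_eq_of_lt (by omega)]
    have hjmod : j % q = j := Nat.mod_eq_of_lt hjq
    have hjdiv : j / q = 0 := Nat.div_eq_of_lt hjq
    rw [hcast, hpmod, hpdiv, hjmod, hjdiv]
    simp
  -- combine
  have hx : ((p.choose j / p : ℕ) : ZMod q) * ((p : ℕ) : ZMod q) = ((p.choose j : ℕ) : ZMod q) := by
    rw [← Nat.cast_mul, hmul]
  rw [hpcast] at hx
  have : ((p.choose j / p : ℕ) : ZMod q) = -((p.choose j : ℕ) : ZMod q) := by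
    linear_combination -hx
  rw [this, hlucas, choose_sub_one_zmod q hq j hj2]
  obtain ⟨m, rfl⟩ : ∃ m, j = m + 1 := ⟨j - 1, by omega⟩
  simp [pow_succ]
end

section
/- Let n be prime with (n+1)/2 also prime, and let δ ∈ {-1, 1}^{n+1} satisfy ∑_{k=0}^{n} δ_k * C(n, k) = 0. Define η_j = (-1)^j * (δ_j + δ_{n-j})/2 for 0 ≤ j ≤ (n-1)/2. Then η_0 = 0 and ∑_{j=0}^{(n-1)/2} η_j = 0; equivalently, the folded vector η has the same number of entries equal to 1 as entries equal to -1. -/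
lemma choose_cong_zmod (q n : ℕ) (hq : q.Prime) (h : n + 1 = 2 * q) :
    ∀ j < q, ((n.choose j : ZMod q) = (-1) ^ j) := by
  haveI : Fact q.Prime := ⟨hq⟩
  intro j hj
  induction j with
  | zero => simp
  | succ j ih =>
    have hj' : j < q := by omega
    have ihj := ih hj'
    have key := Nat.choose_succ_right_eq n j
    have hjn : j ≤ n := by omega
    have hcast : ((n.choose (j+1) : ZMod q)) * (j+1) = (n.choose j : ZMod q) * ((n : ZMod q) - j) := by
      have := congrArg (fun x : ℕ => (x : ZMod q)) key
      push_cast [Nat.cast_sub hjn] at this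
      push_cast
      linear_combination this
    have hnq : (n : ZMod q) = -1 := by
      have : ((n + 1 : ℕ) : ZMod q) = ((2 * q : ℕ) : ZMod q) := by rw [h]
      push_cast at this
      simp at this
      linear_combination this
    rw [ihj, hnq] at hcast
    have hne : ((j : ZMod q) + 1) ≠ 0 := by
      have : ((j + 1 : ℕ) : ZMod q) ≠ 0 := by
        rw [Ne, ZMod.natCast_eq_zero_iff]
        intro hdvd
        have := Nat.le_of_dvd (by omega) hdvd
        omega
      push_cast at this
      exact this
    have goal2 : ((n.choose (j+1) : ZMod q)) * ((j:ZMod q)+1) = (-1)^(j+1) * ((j:ZMod q)+1) := by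
      push_cast at hcast
      rw [hcast]
      ring
    have := mul_right_cancel₀ hne goal2
    exact this

theorem folded_vector_balanced (n : ℕ) (hn : n.Prime) (hq : ((n + 1) / 2).Prime)
    (δ : ℕ → ℤ) (hδ : ∀ k ≤ n, δ k = 1 ∨ δ k = -1)
    (hsum : ∑ k ∈ Finset.range (n + 1), δ k * (n.choose k : ℤ) = 0) :
    (δ 0 + δ n) / 2 = 0 ∧
      ∑ j ∈ Finset.range ((n - 1) / 2 + 1), (-1 : ℤ) ^ j * ((δ j + δ (n - j)) / 2) = 0 := by
  set q := (n + 1) / 2 with hqdef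
  -- n is odd, n ≥ 3, n + 1 = 2 * q
  have hn2 : n ≠ 2 := by
    rintro rfl
    simp [hqdef] at hq
    exact Nat.not_prime_one hq
  have hodd : Odd n := hn.odd_of_ne_two hn2
  have h2q : n + 1 = 2 * q := by
    obtain ⟨m, hm⟩ := hodd
    omega
  have hn3 : 3 ≤ n := by
    have := hn.two_le
    rcases hodd with ⟨m, hm⟩
    omega
  have hq2 : 2 ≤ q := by
    have := hq.two_le
    omega
  -- Part 1: δ 0 + δ n = 0
  have hpart1 : δ 0 + δ n = 0 := by
    have hdvd : (n : ℤ) ∣ δ 0 + δ n := by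
      have hsplit : ∑ k ∈ Finset.range (n + 1), δ k * (n.choose k : ℤ)
          = (∑ k ∈ Finset.range (n - 1), δ (k + 1) * (n.choose (k + 1) : ℤ)) + (δ 0 + δ n) := by
        rw [Finset.sum_range_succ' (fun k => δ k * (n.choose k : ℤ)) n]
        have hn1 : n = (n - 1) + 1 := by omega
        rw [hn1, Finset.sum_range_succ]
        have h1 : n - 1 + 1 = n := by omega
        rw [h1]
        simp [Nat.choose_self, Nat.choose_zero_right]
        ring
      have hmid : (n : ℤ) ∣ ∑ k ∈ Finset.range (n - 1), δ (k + 1) * (n.choose (k + 1) : ℤ) := by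
        apply Finset.dvd_sum
        intro k hk
        simp only [Finset.mem_range] at hk
        have hd : n ∣ n.choose (k + 1) := hn.dvd_choose_self (by omega) (by omega)
        exact Dvd.dvd.mul_left (Int.natCast_dvd_natCast.mpr hd) _
      rw [hsplit] at hsum
      obtain ⟨m, hm⟩ := hmid
      exact ⟨-m + 0, by linarith [hsum, hm]⟩
    rcases hδ 0 (by omega) with h0 | h0 <;> rcases hδ n (le_refl n) with h1 | h1 <;>
      rw [h0, h1] at hdvd ⊢ <;> try ring
    · exfalso
      have := Int.le_of_dvd (by norm_num) hdvd
      omega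
    · exfalso
      have habs : (n : ℤ) ∣ 2 := by
        have : (1 : ℤ) + -1 = 0 := by ring
        rcases hdvd with ⟨c, hc⟩
        exact ⟨-c, by linarith⟩
      have := Int.le_of_dvd (by norm_num) habs
      omega
  refine ⟨by rw [hpart1]; norm_num, ?_⟩
  -- Fold the sum
  set f : ℕ → ℤ := fun k => δ k * (n.choose k : ℤ) with hf
  have hfold : ∑ j ∈ Finset.range q, (δ j + δ (n - j)) * (n.choose j : ℤ) = 0 := by
    have hr : n + 1 = q + q := by omega
    rw [hr, Finset.sum_range_add] at hsum
    have hsecond : ∑ i ∈ Finset.range q, f (q + i) = ∑ i ∈ Finset.range q, δ (n - i) * (n.choose i : ℤ) := by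
      rw [← Finset.sum_range_reflect (fun i => f (q + i)) q]
      apply Finset.sum_congr rfl
      intro i hi
      simp only [Finset.mem_range] at hi
      have h1 : q + (q - 1 - i) = n - i := by omega
      rw [h1, hf]
      simp only
      rw [Nat.choose_symm (by omega : i ≤ n)]
    rw [hsecond] at hsum
    rw [← hsum, ← Finset.sum_add_distrib]
    apply Finset.sum_congr rfl
    intro j hj
    ring
  -- η values
  set η : ℕ → ℤ := fun j => (-1 : ℤ) ^ j * ((δ j + δ (n - j)) / 2) with hη
  have hηprop : ∀ j < q, δ j + δ (n - j) = (-1 : ℤ) ^ j * (2 * η j) ∧ |η j| ≤ 1 := by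
    intro j hj
    have hj1 : j ≤ n := by omega
    have hj2 : n - j ≤ n := by omega
    have hsq : (-1 : ℤ) ^ j * (-1 : ℤ) ^ j = 1 := by
      rw [← pow_add]
      exact (neg_one_pow_eq_one_iff_even (by norm_num)).mpr (Even.add_self j)
    have habs : |(-1 : ℤ) ^ j| = 1 := by
      rw [abs_pow]; norm_num
    rcases hδ j hj1 with h1 | h1 <;> rcases hδ (n - j) hj2 with h2 | h2 <;>
      refine ⟨?_, ?_⟩ <;>
      simp only [hη, h1, h2] <;> norm_num <;>
      first
        | (rw [abs_mul, habs]; norm_num)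
        | linear_combination (2 : ℤ) * hsq
        | linear_combination (-2 : ℤ) * hsq
        | skip
  -- divide by 2
  have hfold2 : ∑ j ∈ Finset.range q, η j * ((-1 : ℤ) ^ j * (n.choose j : ℤ)) = 0 := by
    have h2 : (2 : ℤ) * ∑ j ∈ Finset.range q, η j * ((-1 : ℤ) ^ j * (n.choose j : ℤ)) = 0 := by
      rw [Finset.mul_sum, ← hfold]
      apply Finset.sum_congr rfl
      intro j hj
      simp only [Finset.mem_range] at hj
      rw [(hηprop j hj).1]
      ring
    linarith [h2]
  -- pass to ZMod q
  haveI : Fact q.Prime := ⟨hq⟩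
  have hcong := choose_cong_zmod q n hq h2q
  have hdvdT : (q : ℤ) ∣ ∑ j ∈ Finset.range q, η j := by
    rw [← ZMod.intCast_zmod_eq_zero_iff_dvd]
    have hcast := congrArg (fun x : ℤ => (x : ZMod q)) hfold2
    push_cast at hcast ⊢
    rw [← hcast]
    apply Finset.sum_congr rfl
    intro j hj
    simp only [Finset.mem_range] at hj
    rw [hcong j hj]
    have : ((-1 : ZMod q)) ^ j * ((-1 : ZMod q)) ^ j = 1 := by
      rw [← pow_add, ← two_mul, pow_mul]
      norm_num
    rw [this, mul_one]
  have hη0 : η 0 = 0 := by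
    rw [hη]
    simp [hpart1]
  have hboundT : |∑ j ∈ Finset.range q, η j| < (q : ℤ) := by
    have hTeq : ∑ j ∈ Finset.range q, η j = ∑ i ∈ Finset.range (q - 1), η (i + 1) := by
      have hh : q - 1 + 1 = q := by omega
      conv_lhs => rw [← hh]
      rw [Finset.sum_range_succ' η (q - 1), hη0, add_zero]
    rw [hTeq]
    calc |∑ i ∈ Finset.range (q - 1), η (i + 1)| ≤ ∑ i ∈ Finset.range (q - 1), |η (i + 1)| :=
          Finset.abs_sum_le_sum_abs _ _
      _ ≤ ∑ i ∈ Finset.range (q - 1), 1 := by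
          apply Finset.sum_le_sum
          intro i hi
          simp only [Finset.mem_range] at hi
          exact (hηprop (i + 1) (by omega)).2
      _ = (q - 1 : ℕ) := by simp
      _ < (q : ℤ) := by
          have : (q - 1 : ℕ) < q := by omega
          exact_mod_cast this
  have hT0 : ∑ j ∈ Finset.range q, η j = 0 := Int.eq_zero_of_abs_lt_dvd hdvdT hboundT
  have hrange : (n - 1) / 2 + 1 = q := by omega
  rw [hrange]
  exact hT0
end

section
/- For every natural number k ≥ 1, setting n = 6k + 2, the following identity holds: ∑_{j=0}^{2k-1} (-1)^j C(n, j) - C(n, 2k) + ∑_{j=2k+2}^{3k} (-1)^j C(n, j) = (-1)^{3k} * C(n, n/2) / 2. -/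
lemma partial_alt (n : ℕ) : ∀ m : ℕ, ∑ j ∈ Finset.range (m+1), (-1:ℤ)^j * ((n+1).choose j : ℤ)
    = (-1)^m * (n.choose m : ℤ) := by
  intro m
  induction m with
  | zero => simp
  | succ m ih =>
    rw [Finset.sum_range_succ, ih, Nat.choose_succ_succ]
    push_cast
    ring

lemma double_choose (k : ℕ) : (6*k+8).choose (2*k+3) = 2 * (6*k+8).choose (2*k+2) := by
  have h := Nat.choose_succ_right_eq (6*k+8) (2*k+2)
  have hs : 6*k+8 - (2*k+2) = 2*(2*k+3) := by omega
  rw [hs] at h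
  have h2 : (6*k+8).choose (2*k+2+1) * (2*k+3) = (2 * (6*k+8).choose (2*k+2)) * (2*k+3) := by
    rw [h]; ring
  exact Nat.eq_of_mul_eq_mul_right (by omega) h2

lemma central_choose (k : ℕ) : (6*k+8).choose (3*k+4) = 2 * (6*k+7).choose (3*k+3) := by
  have hsym : (6*k+7).choose (3*k+3) = (6*k+7).choose (3*k+4) := by
    have h := Nat.choose_symm (n := 6*k+7) (k := 3*k+4) (by omega)
    have hs : 6*k+7 - (3*k+4) = 3*k+3 := by omega
    rw [hs] at h
    exact h
  have hp : (6*k+8).choose (3*k+4) = (6*k+7).choose (3*k+3) + (6*k+7).choose (3*k+4) := by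
    have := Nat.choose_succ_succ (6*k+7) (3*k+3)
    convert this using 2 <;> omega
  omega

theorem nontrivial_bisection_six_k_two (k : ℕ) (hk : 1 ≤ k) (n : ℕ) (hn : n = 6 * k + 2) :
    ∑ j ∈ Finset.range (2 * k), (-1 : ℤ) ^ j * (n.choose j : ℤ) - (n.choose (2 * k) : ℤ) +
        ∑ j ∈ Finset.Icc (2 * k + 2) (3 * k), (-1 : ℤ) ^ j * (n.choose j : ℤ) =
      (-1 : ℤ) ^ (3 * k) * ((n.choose (n / 2) : ℤ) / 2) := by
  obtain ⟨k, rfl⟩ := Nat.exists_eq_add_of_le hk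
  subst hn
  -- rewrite everything in terms of k' (named k again)
  have hr1 : 2 * (1 + k) = (2*k+1) + 1 := by ring
  have hIcc : Finset.Icc (2 * (1+k) + 2) (3 * (1+k)) = Finset.Ico (2*k+4) (3*k+4) := by
    rw [← Finset.Ico_add_one_right_eq_Icc]
    congr 1 <;> omega
  have hsplit : (∑ j ∈ Finset.Ico 0 (2*k+4), (-1:ℤ)^j * ((6*(1+k)+2).choose j : ℤ)) +
      (∑ j ∈ Finset.Ico (2*k+4) (3*k+4), (-1:ℤ)^j * ((6*(1+k)+2).choose j : ℤ)) =
      ∑ j ∈ Finset.Ico 0 (3*k+4), (-1:ℤ)^j * ((6*(1+k)+2).choose j : ℤ) :=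
    Finset.sum_Ico_consecutive _ (by omega) (by omega)
  have hn7 : 6*(1+k)+2 = (6*k+7)+1 := by ring
  have e1 : ∑ j ∈ Finset.range (2*(1+k)), (-1:ℤ)^j * ((6*(1+k)+2).choose j : ℤ)
      = (-1)^(2*k+1) * ((6*k+7).choose (2*k+1) : ℤ) := by
    rw [hr1, hn7]; exact partial_alt (6*k+7) (2*k+1)
  have e2 : ∑ j ∈ Finset.Ico 0 (2*k+4), (-1:ℤ)^j * ((6*(1+k)+2).choose j : ℤ)
      = (-1)^(2*k+3) * ((6*k+7).choose (2*k+3) : ℤ) := by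
    rw [← Finset.range_eq_Ico, show 2*k+4 = (2*k+3)+1 from rfl, hn7]
    exact partial_alt (6*k+7) (2*k+3)
  have e3 : ∑ j ∈ Finset.Ico 0 (3*k+4), (-1:ℤ)^j * ((6*(1+k)+2).choose j : ℤ)
      = (-1)^(3*k+3) * ((6*k+7).choose (3*k+3) : ℤ) := by
    rw [← Finset.range_eq_Ico, show 3*k+4 = (3*k+3)+1 from rfl, hn7]
    exact partial_alt (6*k+7) (3*k+3)
  have hIccsum : ∑ j ∈ Finset.Icc (2 * (1+k) + 2) (3 * (1+k)), (-1:ℤ)^j * ((6*(1+k)+2).choose j : ℤ)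
      = (-1)^(3*k+3) * ((6*k+7).choose (3*k+3) : ℤ) - (-1)^(2*k+3) * ((6*k+7).choose (2*k+3) : ℤ) := by
    rw [hIcc]
    rw [← e3, ← e2, ← hsplit]; ring
  rw [e1, hIccsum]
  -- key nat identities
  have key : (6*k+7).choose (2*k+3) = (6*k+7).choose (2*k+1) + (6*(1+k)+2).choose (2*(1+k)) := by
    have hd := double_choose k
    have p1 : (6*k+8).choose (2*k+3) = (6*k+7).choose (2*k+2) + (6*k+7).choose (2*k+3) := by
      have := Nat.choose_succ_succ (6*k+7) (2*k+2)
      convert this using 2 <;> omega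
    have p2 : (6*k+8).choose (2*k+2) = (6*k+7).choose (2*k+1) + (6*k+7).choose (2*k+2) := by
      have := Nat.choose_succ_succ (6*k+7) (2*k+1)
      convert this using 2 <;> omega
    have hcast : (6*(1+k)+2).choose (2*(1+k)) = (6*k+8).choose (2*k+2) := by
      congr 1 <;> omega
    omega
  have hhalf : ((6*(1+k)+2).choose ((6*(1+k)+2)/2) : ℤ) / 2 = ((6*k+7).choose (3*k+3) : ℤ) := by
    have hc : (6*(1+k)+2).choose ((6*(1+k)+2)/2) = 2 * (6*k+7).choose (3*k+3) := by
      have := central_choose k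
      convert this using 2 <;> omega
    rw [hc]
    push_cast
    rw [Int.mul_ediv_cancel_left _ (by norm_num)]
  rw [hhalf]
  have hkey : ((6*k+7).choose (2*k+3) : ℤ)
      = ((6*k+7).choose (2*k+1) : ℤ) + ((6*(1+k)+2).choose (2*(1+k)) : ℤ) := by
    exact_mod_cast congrArg (Nat.cast : ℕ → ℤ) key
  have hp1 : (-1:ℤ)^(2*k+1) = -1 := by
    rw [pow_succ]; simp [pow_mul]
  have hp3 : (-1:ℤ)^(2*k+3) = -1 := by
    rw [show 2*k+3 = (2*k+2)+1 from rfl, pow_succ]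
    simp [show 2*k+2 = 2*(k+1) from by ring, pow_mul]
  have hp : (-1:ℤ)^(3*(1+k)) = (-1:ℤ)^(3*k+3) := by
    congr 1; ring
  rw [hp, hp1, hp3]
  linarith [hkey]
end

section
/- For every natural number n and k with n ≥ 1, the identity C(n, 2k) = C(n-1, 2k+1) - C(n-1, 2k-1) holds if and only if n = 6k + 2 (for k ≥ 1 and 2k+1 ≤ n-1). -/
theorem choose_identity_iff_six_k_two (n k : ℕ) (hn : 1 ≤ n) (hk : 1 ≤ k)
    (hkn : 2 * k + 1 ≤ n - 1) :
    (n.choose (2 * k) : ℤ) = ((n - 1).choose (2 * k + 1) : ℤ) - ((n - 1).choose (2 * k - 1) : ℤ)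
      ↔ n = 6 * k + 2 := by
  obtain ⟨m, rfl⟩ : ∃ m, n = m + 1 := ⟨n - 1, by omega⟩
  simp only [Nat.add_sub_cancel] at *
  obtain ⟨s, rfl⟩ : ∃ s, m = 2 * k + 1 + s := ⟨m - (2 * k + 1), by omega⟩
  -- Pascal
  have hp : ((2 * k + 1 + s) + 1).choose ((2 * k - 1) + 1)
      = (2 * k + 1 + s).choose (2 * k - 1) + (2 * k + 1 + s).choose ((2 * k - 1) + 1) :=
    Nat.choose_succ_succ _ _
  rw [show 2 * k - 1 + 1 = 2 * k from by omega] at hp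
  have h1 : (2 * k + 1 + s).choose (2 * k) * (2 * k)
      = (2 * k + 1 + s).choose (2 * k - 1) * (s + 2) := by
    have h := Nat.choose_succ_right_eq (2 * k + 1 + s) (2 * k - 1)
    rw [show 2 * k - 1 + 1 = 2 * k from by omega,
      show 2 * k + 1 + s - (2 * k - 1) = s + 2 from by omega] at h
    exact h
  have h2 : (2 * k + 1 + s).choose (2 * k + 1) * (2 * k + 1)
      = (2 * k + 1 + s).choose (2 * k) * (s + 1) := by
    have h := Nat.choose_succ_right_eq (2 * k + 1 + s) (2 * k)
    rw [show 2 * k + 1 + s - (2 * k) = s + 1 from by omega] at h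
    exact h
  have ha : 0 < (2 * k + 1 + s).choose (2 * k - 1) := Nat.choose_pos (by omega)
  set A := (2 * k + 1 + s).choose (2 * k - 1) with hA
  set B := (2 * k + 1 + s).choose (2 * k) with hB
  set C := (2 * k + 1 + s).choose (2 * k + 1) with hC
  rw [hp]
  have h1' : (B : ℤ) * (2 * k) = (A : ℤ) * (s + 2) := by exact_mod_cast h1
  have h2' : (C : ℤ) * (2 * k + 1) = (B : ℤ) * (s + 1) := by exact_mod_cast h2
  have ha' : (0 : ℤ) < A := by exact_mod_cast ha
  have hk' : (1 : ℤ) ≤ (k : ℤ) := by exact_mod_cast hk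
  push_cast
  constructor
  · intro heq
    have heq' : (C : ℤ) = 2 * A + B := by linarith
    have key : (A : ℤ) * (((s : ℤ) - 4 * k) * ((s : ℤ) + 2 * k + 2)) = 0 := by
      linear_combination (2 * (k : ℤ) - s) * h1' - 2 * k * h2'
        + 2 * k * (2 * k + 1) * heq'
    have h0 : ((s : ℤ) - 4 * k) * ((s : ℤ) + 2 * k + 2) = 0 := by
      rcases mul_eq_zero.mp key with h | h
      · exact absurd h (by positivity)
      · exact h
    have hs0 : (0 : ℤ) ≤ (s : ℤ) := Int.ofNat_nonneg s
    have hs : (s : ℤ) = 4 * k := by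
      rcases mul_eq_zero.mp h0 with h | h
      · linarith
      · linarith
    have : s = 4 * k := by exact_mod_cast hs
    omega
  · intro hs
    have hs4 : (s : ℤ) = 4 * k := by
      have : s = 4 * k := by omega
      exact_mod_cast this
    have heq' : (C : ℤ) * (2 * k * (2 * k + 1)) = (2 * A + B) * (2 * k * (2 * k + 1)) := by
      linear_combination (A : ℤ) * ((s : ℤ) + 2 * k + 2) * hs4
        + ((s : ℤ) - 2 * k) * h1' + 2 * k * h2'
    have hne : (2 * (k : ℤ) * (2 * k + 1)) ≠ 0 := by positivity
    have hfin : (C : ℤ) = 2 * A + B := mul_right_cancel₀ hne heq'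
    linarith
end

section
/- For every integer k ≥ 2, setting n = 4k² - 3 and s = 2k² - k, the identity C(n, s-3) - C(n, s-2) - C(n, s-1) + C(n, s) = 0 holds. -/
theorem choose_four_term_vanishing (k : ℕ) (hk : 2 ≤ k) (n s : ℕ)
    (hn : n = 4 * k ^ 2 - 3) (hs : s = 2 * k ^ 2 - k) :
    (n.choose (s - 3) : ℤ) - (n.choose (s - 2) : ℤ) - (n.choose (s - 1) : ℤ)
      + (n.choose s : ℤ) = 0 := by
  obtain ⟨q, hq, hq4, hqk⟩ : ∃ q, k ^ 2 = q ∧ 4 ≤ q ∧ k ≤ q :=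
    ⟨k ^ 2, rfl, by nlinarith, by nlinarith⟩
  rw [hq] at hn hs
  set m := s - 3 with hm
  have hqZ : (q : ℤ) = (k : ℤ) ^ 2 := by rw [← hq]; push_cast; ring
  have hkZ : (2 : ℤ) ≤ (k : ℤ) := by exact_mod_cast hk
  have hpos : (0 : ℤ) < (2 * (k : ℤ) ^ 2 - k - 2) * (2 * (k : ℤ) ^ 2 - k - 1)
      * (2 * (k : ℤ) ^ 2 - k) := by
    have h1 : (0 : ℤ) < 2 * (k : ℤ) ^ 2 - k - 2 := by nlinarith [sq_nonneg ((k : ℤ) - 2)]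
    have h2 : (0 : ℤ) < 2 * (k : ℤ) ^ 2 - k - 1 := by nlinarith [sq_nonneg ((k : ℤ) - 2)]
    have h3 : (0 : ℤ) < 2 * (k : ℤ) ^ 2 - k := by nlinarith [sq_nonneg ((k : ℤ) - 2)]
    exact mul_pos (mul_pos h1 h2) h3
  have hmZ : (m : ℤ) = 2 * (q : ℤ) - k - 3 := by omega
  have hnZ : (n : ℤ) = 4 * (q : ℤ) - 3 := by omega
  have E1 : (n.choose (m + 1) : ℤ) * ((m : ℤ) + 1)
      = (n.choose m : ℤ) * ((n : ℤ) - m) := by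
    have h := Nat.choose_succ_right_eq n m
    have hmn : m ≤ n := by omega
    zify [hmn] at h
    linarith [h]
  have E2 : (n.choose (m + 2) : ℤ) * ((m : ℤ) + 2)
      = (n.choose (m + 1) : ℤ) * ((n : ℤ) - (m + 1)) := by
    have h := Nat.choose_succ_right_eq n (m + 1)
    have hmn : m + 1 ≤ n := by omega
    zify [hmn] at h
    linarith [h]
  have E3 : (n.choose (m + 3) : ℤ) * ((m : ℤ) + 3)
      = (n.choose (m + 2) : ℤ) * ((n : ℤ) - (m + 2)) := by
    have h := Nat.choose_succ_right_eq n (m + 2)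
    have hmn : m + 2 ≤ n := by omega
    zify [hmn] at h
    linarith [h]
  rw [hmZ, hnZ, hqZ] at E1 E2 E3
  have key : ((n.choose m : ℤ) - n.choose (m + 1) - n.choose (m + 2) + n.choose (m + 3))
      * ((2 * (k : ℤ) ^ 2 - k - 2) * (2 * (k : ℤ) ^ 2 - k - 1) * (2 * (k : ℤ) ^ 2 - k)) = 0 := by
    linear_combination ((2 * (k : ℤ) ^ 2 + k - 1) * (2 * k - 2)
        - (2 * (k : ℤ) ^ 2 - k) * (2 * (k : ℤ) ^ 2 - k - 1)) * E1
      + ((2 * (k : ℤ) ^ 2 - k - 2) * (2 * k - 2)) * E2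
      + ((2 * (k : ℤ) ^ 2 - k - 1) * (2 * (k : ℤ) ^ 2 - k - 2)) * E3
  have hfac : ((n.choose m : ℤ) - n.choose (m + 1) - n.choose (m + 2) + n.choose (m + 3)) = 0 := by
    rcases mul_eq_zero.mp key with h | h
    · exact h
    · exact absurd h hpos.ne'
  have g3 : s - 3 = m := rfl
  have g2 : s - 2 = m + 1 := by omega
  have g1 : s - 1 = m + 2 := by omega
  have g0 : s = m + 3 := by omega
  rw [g2, g1, g0]
  linarith [hfac]
end
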